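/- Assume k < d. Then max{deg(u) : u ∈ T} = max_{0 ≤ i ≤ d−1} deg(w_i) − 2 = max_{0 ≤ i ≤ d−1} (ω₁(i) + ω₂(d−i))/d − 2; in particular the supremum of deg over T is finite and attained. -/

import Mathlib

namespace ProjMonomialCurve

/-- The numerical semigroup generated by `a 1, …, a k` (equivalently by `A₁ = {0,a 1,…,a k}`). -/
def S1 (k : ℕ) (a : ℕ → ℕ) : Set ℕ :=
  {n | ∃ x : ℕ → ℕ, n = ∑ i ∈ Finset.Icc 1 k, x i * a i}

/-- The numerical semigroup generated by the nonzero elements `d - a i` (`0 ≤ i ≤ k-1`)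
of `A₂`, where `d = a k`. -/
def S2 (k : ℕ) (a : ℕ → ℕ) : Set ℕ :=
  {n | ∃ x : ℕ → ℕ, n = ∑ i ∈ Finset.range k, x i * (a k - a i)}

/-- `δ₁ n`: least total number of summands over representations `n = ∑ xᵢ aᵢ`. -/
noncomputable def delta1 (k : ℕ) (a : ℕ → ℕ) (n : ℕ) : ℕ :=
  sInf {m | ∃ x : ℕ → ℕ, n = ∑ i ∈ Finset.Icc 1 k, x i * a i ∧ m = ∑ i ∈ Finset.Icc 1 k, x i}

/-- `δ₂ n`: least total number of summands over representations of `n` by the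
nonzero elements of `A₂`. -/
noncomputable def delta2 (k : ℕ) (a : ℕ → ℕ) (n : ℕ) : ℕ :=
  sInf {m | ∃ x : ℕ → ℕ,
    n = ∑ i ∈ Finset.range k, x i * (a k - a i) ∧ m = ∑ i ∈ Finset.range k, x i}

/-- `ω₁ i`: the least element of `S₍₁₎` congruent to `i` modulo `d = a k`. -/
noncomputable def omega1 (k : ℕ) (a : ℕ → ℕ) (i : ℕ) : ℕ :=
  sInf {n | n ∈ S1 k a ∧ n % a k = i % a k}

/-- `ω₂ i`: the least element of `S₍₂₎` congruent to `i` modulo `d = a k`. -/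
noncomputable def omega2 (k : ℕ) (a : ℕ → ℕ) (i : ℕ) : ℕ :=
  sInf {n | n ∈ S2 k a ∧ n % a k = i % a k}

/-- `w i = (ω₁(i), ω₂(d-i))`. -/
noncomputable def w (k : ℕ) (a : ℕ → ℕ) (i : ℕ) : ℕ × ℕ :=
  (omega1 k a i, omega2 k a (a k - i))

/-- `e h = (h, d - h)`. -/
def e (k : ℕ) (a : ℕ → ℕ) (h : ℕ) : ℕ × ℕ := (h, a k - h)

/-- The affine semigroup `S ⊆ ℕ²` generated by `e (a 0), …, e (a k)`. -/
def S (k : ℕ) (a : ℕ → ℕ) : Set (ℕ × ℕ) :=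
  {u | ∃ x : ℕ → ℕ, u = ∑ i ∈ Finset.range (k+1), x i • e k a (a i)}

/-- `S' = {u ∈ ℕ² | u + p•e₀ ∈ S and u + p•e_d ∈ S for some p ∈ ℕ}`. -/
def S' (k : ℕ) (a : ℕ → ℕ) : Set (ℕ × ℕ) :=
  {u | ∃ p : ℕ, u + p • e k a 0 ∈ S k a ∧ u + p • e k a (a k) ∈ S k a}

/-- `deg u = (u₁ + u₂)/d` for `u ∈ ℕ²`. -/
def deg (k : ℕ) (a : ℕ → ℕ) (u : ℕ × ℕ) : ℕ := (u.1 + u.2) / a k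

/-- The index set `𝕀`. -/
noncomputable def II (k : ℕ) (a : ℕ → ℕ) : Set ℕ :=
  {i | 1 ≤ i ∧ i ≤ a k - 1 ∧ (∀ j, 1 ≤ j → j ≤ k - 1 → i ≠ a j) ∧
    deg k a (w k a i) < delta1 k a (w k a i).1}

/-- `T = {u ∈ ℤ² | d ∣ u₁+u₂, u₁ ∉ S₍₁₎, u₂ ∉ S₍₂₎}`. -/
def T (k : ℕ) (a : ℕ → ℕ) : Set (ℤ × ℤ) :=
  {u | (a k : ℤ) ∣ u.1 + u.2 ∧ (∀ n ∈ S1 k a, (n : ℤ) ≠ u.1) ∧ (∀ n ∈ S2 k a, (n : ℤ) ≠ u.2)}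

/-- `deg` for integer points. -/
def degZ (k : ℕ) (a : ℕ → ℕ) (u : ℤ × ℤ) : ℤ := (u.1 + u.2) / (a k : ℤ)

/-- The Castelnuovo–Mumford regularity, expressed combinatorially:
`max({deg u + 1 : u ∈ S'∖S} ∪ {deg u + 2 : u ∈ T})`. -/
noncomputable def reg (k : ℕ) (a : ℕ → ℕ) : ℤ :=
  sSup ({z : ℤ | ∃ u ∈ S' k a \ S k a, z = (deg k a u : ℤ) + 1} ∪
        {z : ℤ | ∃ u ∈ T k a, z = degZ k a u + 2})

/-- Frobenius number of `S₍₁₎` (greatest integer not in it; `-1` if the semigroup is all of `ℕ`). -/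
noncomputable def F1 (k : ℕ) (a : ℕ → ℕ) : ℤ :=
  sSup {z : ℤ | ∀ n ∈ S1 k a, (n : ℤ) ≠ z}

/-- Frobenius number of `S₍₂₎`. -/
noncomputable def F2 (k : ℕ) (a : ℕ → ℕ) : ℤ :=
  sSup {z : ℤ | ∀ n ∈ S2 k a, (n : ℤ) ≠ z}

/-- The largest gap `λ_max = max_{1 ≤ i ≤ k} (a i - a (i-1) - 1)`. -/
def lamMax (k : ℕ) (a : ℕ → ℕ) : ℕ :=
  (Finset.Icc 1 k).sup (fun i => a i - a (i-1) - 1)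

/-- The second largest gap: the minimum over `i` of the largest gap among indices `≠ i`. -/
noncomputable def lamSl (k : ℕ) (a : ℕ → ℕ) : ℕ :=
  sInf {m | ∃ i, 1 ≤ i ∧ i ≤ k ∧
    m = ((Finset.Icc 1 k).erase i).sup (fun j => a j - a (j-1) - 1)}

/-- The set `A₁ = {a 0, a 1, …, a k}`. -/
def A1set (k : ℕ) (a : ℕ → ℕ) : Set ℕ := {m | ∃ j ≤ k, a j = m}



lemma gcd_bezout (s : Finset ℕ) (f : ℕ → ℕ) :
    ∃ c : ℕ → ℤ, ((s.gcd f : ℕ) : ℤ) = ∑ j ∈ s, c j * f j := by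
  classical
  induction s using Finset.induction_on with
  | empty => exact ⟨0, by simp⟩
  | insert b s hb ih =>
      obtain ⟨c, hc⟩ := ih
      refine ⟨fun j => if j = b then Nat.gcdA (f b) (s.gcd f)
        else Nat.gcdB (f b) (s.gcd f) * c j, ?_⟩
      rw [Finset.gcd_insert, Finset.sum_insert hb]
      simp only [if_pos rfl]
      have h2 : ∑ j ∈ s, (if j = b then Nat.gcdA (f b) (s.gcd f)
          else Nat.gcdB (f b) (s.gcd f) * c j) * (f j : ℤ)
          = Nat.gcdB (f b) (s.gcd f) * ∑ j ∈ s, c j * f j := by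
        rw [Finset.mul_sum]
        refine Finset.sum_congr rfl fun j hj => ?_
        rw [if_neg (by rintro rfl; exact hb hj)]
        ring
      rw [h2, ← hc]
      have h3 := Nat.gcd_eq_gcd_ab (f b) (s.gcd f)
      have h4 : GCDMonoid.gcd (f b) (s.gcd f) = Nat.gcd (f b) (s.gcd f) := rfl
      rw [h4]
      push_cast [h3]
      ring

lemma cast_toNat_mod (m : ℤ) (n : ℕ) (hn : 0 < n) :
    (((m % (n:ℤ)).toNat : ℕ) : ZMod n) = (m : ZMod n) := by
  rw [← Int.cast_natCast, Int.toNat_of_nonneg (Int.emod_nonneg _ (by exact_mod_cast hn.ne')),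
    ZMod.intCast_mod]

lemma amono (k : ℕ) (a : ℕ → ℕ) (hmono : ∀ i, i < k → a i < a (i+1)) :
    ∀ i j, i ≤ j → j ≤ k → a i ≤ a j := by
  intro i j hij
  induction hij with
  | refl => intro _; exact le_rfl
  | @step m hm ih =>
      intro hmk
      exact le_trans (ih (by omega)) (le_of_lt (hmono m (by omega)))


lemma S1_add (k : ℕ) (a : ℕ → ℕ) (hk1 : 1 ≤ k) {n : ℕ} (hn : n ∈ S1 k a) (m : ℕ) :
    n + m * a k ∈ S1 k a := by
  obtain ⟨x, rfl⟩ := hn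
  refine ⟨fun j => if j = k then x j + m else x j, ?_⟩
  have h : ∀ j ∈ Finset.Icc 1 k, (if j = k then x j + m else x j) * a j
      = x j * a j + (if j = k then m * a k else 0) := by
    intro j _
    by_cases hj : j = k
    · subst hj; simp [add_mul]
    · simp [hj]
  rw [Finset.sum_congr rfl h, Finset.sum_add_distrib, Finset.sum_ite_eq' (Finset.Icc 1 k) k]
  simp [hk1]

lemma S2_add (k : ℕ) (a : ℕ → ℕ) (hk1 : 1 ≤ k) (ha0 : a 0 = 0) {n : ℕ} (hn : n ∈ S2 k a)
    (m : ℕ) : n + m * a k ∈ S2 k a := by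
  obtain ⟨x, rfl⟩ := hn
  refine ⟨fun j => if j = 0 then x j + m else x j, ?_⟩
  have h : ∀ j ∈ Finset.range k, (if j = 0 then x j + m else x j) * (a k - a j)
      = x j * (a k - a j) + (if j = 0 then m * (a k - a j) else 0) := by
    intro j _
    by_cases hj : j = 0
    · subst hj; simp [add_mul]
    · simp [hj]
  rw [Finset.sum_congr rfl h, Finset.sum_add_distrib, Finset.sum_ite_eq' (Finset.range k) 0]
  simp [hk1, ha0, Nat.pos_of_ne_zero, hk1.trans_lt', Finset.mem_range]

lemma bound1 (k : ℕ) (a : ℕ → ℕ) (hk1 : 1 ≤ k) (hd : 0 < a k) (i : ℕ)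
    (hmem : omega1 k a i ∈ S1 k a) (u1 : ℤ) (hnot : ∀ n ∈ S1 k a, (n:ℤ) ≠ u1)
    (hcong : u1 % (a k : ℤ) = (omega1 k a i : ℤ) % (a k : ℤ)) :
    u1 ≤ (omega1 k a i : ℤ) - a k := by
  by_contra hcon
  push_neg at hcon
  have hdvd : (a k : ℤ) ∣ (omega1 k a i : ℤ) - u1 := Int.ModEq.dvd hcong
  obtain ⟨m, hm⟩ := hdvd
  have hdz : (0:ℤ) < (a k : ℤ) := by exact_mod_cast hd
  have hm0 : m ≤ 0 := by nlinarith
  have ht : ((-m).toNat : ℤ) = -m := Int.toNat_of_nonneg (by omega)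
  refine hnot (omega1 k a i + (-m).toNat * a k) (S1_add k a hk1 hmem _) ?_
  push_cast [ht]
  linarith

lemma bound2 (k : ℕ) (a : ℕ → ℕ) (hk1 : 1 ≤ k) (ha0 : a 0 = 0) (hd : 0 < a k) (i : ℕ)
    (hmem : omega2 k a i ∈ S2 k a) (u2 : ℤ) (hnot : ∀ n ∈ S2 k a, (n:ℤ) ≠ u2)
    (hcong : u2 % (a k : ℤ) = (omega2 k a i : ℤ) % (a k : ℤ)) :
    u2 ≤ (omega2 k a i : ℤ) - a k := by
  by_contra hcon
  push_neg at hcon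
  have hdvd : (a k : ℤ) ∣ (omega2 k a i : ℤ) - u2 := Int.ModEq.dvd hcong
  obtain ⟨m, hm⟩ := hdvd
  have hdz : (0:ℤ) < (a k : ℤ) := by exact_mod_cast hd
  have hm0 : m ≤ 0 := by nlinarith
  have ht : ((-m).toNat : ℤ) = -m := Int.toNat_of_nonneg (by omega)
  refine hnot (omega2 k a i + (-m).toNat * a k) (S2_add k a hk1 ha0 hmem _) ?_
  push_cast [ht]
  linarith

lemma S1_cover (k : ℕ) (a : ℕ → ℕ) (hgcd : (Finset.Icc 1 k).gcd a = 1) (hd : 0 < a k)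
    (i : ℕ) : ∃ n, n ∈ S1 k a ∧ n % a k = i % a k := by
  obtain ⟨c, hc⟩ := gcd_bezout (Finset.Icc 1 k) a
  rw [hgcd] at hc
  refine ⟨∑ j ∈ Finset.Icc 1 k, ((i * c j) % ((a k):ℤ)).toNat * a j,
    ⟨fun j => ((i * c j) % ((a k):ℤ)).toNat, rfl⟩, ?_⟩
  refine (ZMod.natCast_eq_natCast_iff _ _ _).mp ?_
  push_cast
  have h : ∀ j ∈ Finset.Icc 1 k,
      ((((i : ℤ) * c j % ((a k):ℤ)).toNat : ℕ) : ZMod (a k)) * (a j : ZMod (a k))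
        = (i : ZMod (a k)) * ((c j : ZMod (a k)) * (a j : ZMod (a k))) := by
    intro j _
    rw [cast_toNat_mod _ _ hd]
    push_cast
    ring
  rw [Finset.sum_congr rfl h, ← Finset.mul_sum]
  have hc2 : (1 : ZMod (a k)) = ∑ j ∈ Finset.Icc 1 k, (c j : ZMod (a k)) * (a j : ZMod (a k)) := by
    have h5 := congrArg (fun z : ℤ => (z : ZMod (a k))) hc
    push_cast at h5
    simpa using h5
  rw [← hc2, mul_one]

lemma S2_cover (k : ℕ) (a : ℕ → ℕ) (hk1 : 1 ≤ k) (ha0 : a 0 = 0)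
    (hmono : ∀ i, i < k → a i < a (i+1))
    (hgcd : (Finset.Icc 1 k).gcd a = 1) (hd : 0 < a k)
    (i : ℕ) : ∃ n, n ∈ S2 k a ∧ n % a k = i % a k := by
  obtain ⟨c, hc⟩ := gcd_bezout (Finset.Icc 1 k) a
  rw [hgcd] at hc
  refine ⟨∑ j ∈ Finset.range k, ((-(i:ℤ) * c j) % ((a k):ℤ)).toNat * (a k - a j),
    ⟨fun j => ((-(i:ℤ) * c j) % ((a k):ℤ)).toNat, rfl⟩, ?_⟩
  refine (ZMod.natCast_eq_natCast_iff _ _ _).mp ?_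
  push_cast
  have hterm : ∀ j ∈ Finset.range k,
      ((((-(i : ℤ)) * c j % ((a k):ℤ)).toNat : ℕ) : ZMod (a k))
          * (((a k - a j : ℕ) : ℕ) : ZMod (a k))
        = (i : ZMod (a k)) * ((c j : ZMod (a k)) * (a j : ZMod (a k))) := by
    intro j hj
    have hle : a j ≤ a k := amono k a hmono j k (by simp at hj; omega) le_rfl
    rw [cast_toNat_mod _ _ hd, Nat.cast_sub hle, ZMod.natCast_self]
    push_cast
    ring
  rw [Finset.sum_congr rfl hterm, ← Finset.mul_sum]
  have hsum : ∑ j ∈ Finset.range k, (c j : ZMod (a k)) * (a j : ZMod (a k))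
      = ∑ j ∈ Finset.Icc 1 k, (c j : ZMod (a k)) * (a j : ZMod (a k)) := by
    have h1 : ∑ j ∈ Finset.range k, (c j : ZMod (a k)) * (a j : ZMod (a k))
        = ∑ j ∈ Finset.Icc 0 k, (c j : ZMod (a k)) * (a j : ZMod (a k)) := by
      refine Finset.sum_subset ?_ ?_
      · intro x hx; simp at hx ⊢; omega
      · intro x hx hx2
        have hxk : x = k := by simp at hx hx2; omega
        subst hxk
        rw [ZMod.natCast_self, mul_zero]
    have h2 : ∑ j ∈ Finset.Icc 1 k, (c j : ZMod (a k)) * (a j : ZMod (a k))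
        = ∑ j ∈ Finset.Icc 0 k, (c j : ZMod (a k)) * (a j : ZMod (a k)) := by
      refine Finset.sum_subset ?_ ?_
      · intro x hx; simp at hx ⊢; omega
      · intro x hx hx2
        have hx0 : x = 0 := by simp at hx hx2; omega
        subst hx0
        rw [ha0]; simp
    rw [h1, h2]
  have hc2 : (1 : ZMod (a k)) = ∑ j ∈ Finset.Icc 1 k, (c j : ZMod (a k)) * (a j : ZMod (a k)) := by
    have h5 := congrArg (fun z : ℤ => (z : ZMod (a k))) hc
    push_cast at h5
    simpa using h5
  rw [hsum, ← hc2, mul_one]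

theorem statement_7 (k : ℕ) (a : ℕ → ℕ) (hk : 3 ≤ k) (ha0 : a 0 = 0)
    (hmono : ∀ i, i < k → a i < a (i+1)) (hgcd : (Finset.Icc 1 k).gcd a = 1) (hkd : k < a k) :
    IsGreatest {z : ℤ | ∃ u ∈ T k a, z = degZ k a u}
      (((((Finset.range (a k)).sup fun i => deg k a (w k a i)) : ℕ) : ℤ) - 2) ∧
    ((Finset.range (a k)).sup fun i => deg k a (w k a i)) =
      ((Finset.range (a k)).sup fun i => (omega1 k a i + omega2 k a (a k - i)) / a k) := by
  have hk1 : 1 ≤ k := by omega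
  have hd : 0 < a k := by omega
  have hdz : (0:ℤ) < (a k : ℤ) := by exact_mod_cast hd
  have hdzne : (a k : ℤ) ≠ 0 := hdz.ne'
  have hω1 : ∀ i, omega1 k a i ∈ S1 k a ∧ omega1 k a i % a k = i % a k :=
    fun i => Nat.sInf_mem (S1_cover k a hgcd hd i)
  have hω2 : ∀ i, omega2 k a i ∈ S2 k a ∧ omega2 k a i % a k = i % a k :=
    fun i => Nat.sInf_mem (S2_cover k a hk1 ha0 hmono hgcd hd i)
  have hω1min : ∀ i n, n ∈ S1 k a → n % a k = i % a k → omega1 k a i ≤ n :=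
    fun i n h1 h2 => Nat.sInf_le ⟨h1, h2⟩
  have hω2min : ∀ i n, n ∈ S2 k a → n % a k = i % a k → omega2 k a i ≤ n :=
    fun i n h1 h2 => Nat.sInf_le ⟨h1, h2⟩
  have hWdvd : ∀ i, i ≤ a k → a k ∣ omega1 k a i + omega2 k a (a k - i) := by
    intro i hi
    apply Nat.dvd_of_mod_eq_zero
    rw [Nat.add_mod, (hω1 i).2, (hω2 _).2, ← Nat.add_mod, Nat.add_sub_cancel' hi, Nat.mod_self]
  constructor
  · constructor
    · -- membership: the max is attained
      obtain ⟨i0, hi0mem, hi0⟩ := Finset.exists_mem_eq_sup (Finset.range (a k))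
        ⟨0, Finset.mem_range.mpr hd⟩ (fun i => deg k a (w k a i))
      have hi0lt : i0 < a k := Finset.mem_range.mp hi0mem
      obtain ⟨q, hq⟩ := hWdvd i0 hi0lt.le
      have hqz : (omega1 k a i0 : ℤ) + (omega2 k a (a k - i0) : ℤ) = (a k : ℤ) * q := by
        exact_mod_cast congrArg (Nat.cast : ℕ → ℤ) hq
      have hM : ((Finset.range (a k)).sup fun i => deg k a (w k a i)) = q := by
        rw [hi0]
        show (omega1 k a i0 + omega2 k a (a k - i0)) / a k = q
        rw [hq]
        exact Nat.mul_div_cancel_left q hd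
      refine ⟨((omega1 k a i0 : ℤ) - a k, (omega2 k a (a k - i0) : ℤ) - a k),
        ⟨⟨(q : ℤ) - 2, by linear_combination hqz⟩, ?_, ?_⟩, ?_⟩
      · intro n hn he
        have he2 : (n : ℤ) = (omega1 k a i0 : ℤ) - (a k : ℤ) := he
        have h1 : omega1 k a i0 = n + a k := by
          have : (omega1 k a i0 : ℤ) = (n : ℤ) + a k := by linarith
          exact_mod_cast this
        have hmod : n % a k = i0 % a k := by
          rw [← (hω1 i0).2, h1, Nat.add_mod_right]
        have := hω1min i0 n hn hmod
        omega
      · intro n hn he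
        have he2 : (n : ℤ) = (omega2 k a (a k - i0) : ℤ) - (a k : ℤ) := he
        have h1 : omega2 k a (a k - i0) = n + a k := by
          have : (omega2 k a (a k - i0) : ℤ) = (n : ℤ) + a k := by linarith
          exact_mod_cast this
        have hmod : n % a k = (a k - i0) % a k := by
          rw [← (hω2 (a k - i0)).2, h1, Nat.add_mod_right]
        have := hω2min (a k - i0) n hn hmod
        omega
      · rw [hM]
        show (q : ℤ) - 2 = (((omega1 k a i0 : ℤ) - a k) + ((omega2 k a (a k - i0) : ℤ) - a k)) / (a k : ℤ)
        rw [show ((omega1 k a i0 : ℤ) - a k) + ((omega2 k a (a k - i0) : ℤ) - a k)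
            = (a k : ℤ) * ((q:ℤ) - 2) from by linear_combination hqz,
          Int.mul_ediv_cancel_left _ hdzne]
    · -- upper bound
      rintro z ⟨u, ⟨hdvd, hn1, hn2⟩, rfl⟩
      have hi : (((u.1 % ((a k):ℤ)).toNat : ℕ) : ℤ) = u.1 % ((a k):ℤ) :=
        Int.toNat_of_nonneg (Int.emod_nonneg _ hdzne)
      set i := (u.1 % ((a k):ℤ)).toNat with hidef
      have hilt : i < a k := by
        have h5 := Int.emod_lt_of_pos u.1 hdz
        have h6 : ((i:ℕ):ℤ) < ((a k):ℤ) := by rw [hi]; exact h5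
        exact_mod_cast h6
      have hmod1 : (omega1 k a i : ℤ) % ((a k):ℤ) = ((i:ℕ):ℤ) % ((a k):ℤ) := by
        exact_mod_cast congrArg (Nat.cast : ℕ → ℤ) (hω1 i).2
      have hcong1 : u.1 % ((a k):ℤ) = (omega1 k a i : ℤ) % ((a k):ℤ) := by
        rw [hmod1, hi, Int.emod_emod_of_dvd _ dvd_rfl]
      have h1 := bound1 k a hk1 hd i (hω1 i).1 u.1 hn1 hcong1
      obtain ⟨m0, hm0⟩ := hdvd
      have e1 : u.1 - ((i:ℕ):ℤ) = ((a k):ℤ) * (u.1 / ((a k):ℤ)) := by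
        rw [hi, Int.emod_def]; ring
      have hdvd2 : ((a k):ℤ) ∣ ((a k - i : ℕ):ℤ) - u.2 :=
        ⟨1 + u.1 / ((a k):ℤ) - m0, by
          rw [Nat.cast_sub hilt.le]; linear_combination e1 - hm0⟩
      have hmod2 : (omega2 k a (a k - i) : ℤ) % ((a k):ℤ) = ((a k - i : ℕ):ℤ) % ((a k):ℤ) := by
        exact_mod_cast congrArg (Nat.cast : ℕ → ℤ) (hω2 (a k - i)).2
      have hcong2 : u.2 % ((a k):ℤ) = (omega2 k a (a k - i) : ℤ) % ((a k):ℤ) := by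
        rw [hmod2]
        exact Int.modEq_iff_dvd.mpr hdvd2
      have h2 := bound2 k a hk1 ha0 hd (a k - i) (hω2 (a k - i)).1 u.2 hn2 hcong2
      obtain ⟨q, hq⟩ := hWdvd i hilt.le
      have hqz : (omega1 k a i : ℤ) + (omega2 k a (a k - i) : ℤ) = ((a k):ℤ) * q := by
        exact_mod_cast congrArg (Nat.cast : ℕ → ℤ) hq
      have h5 : ((a k):ℤ) * m0 ≤ ((a k):ℤ) * ((q:ℤ) - 2) := by nlinarith
      have hm0q : m0 ≤ (q:ℤ) - 2 := le_of_mul_le_mul_left h5 hdz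
      have hdeg : degZ k a u = m0 := by
        show (u.1 + u.2) / ((a k):ℤ) = m0
        rw [hm0, Int.mul_ediv_cancel_left _ hdzne]
      have hqM : q ≤ (Finset.range (a k)).sup fun j => deg k a (w k a j) := by
        have hle : deg k a (w k a i) ≤ (Finset.range (a k)).sup fun j => deg k a (w k a j) :=
          Finset.le_sup (f := fun j => deg k a (w k a j)) (Finset.mem_range.mpr hilt)
        have hwq : deg k a (w k a i) = q := by
          show (omega1 k a i + omega2 k a (a k - i)) / a k = q
          rw [hq]
          exact Nat.mul_div_cancel_left q hd
        rwa [hwq] at hle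
      have hqMz : (q:ℤ) ≤ (((Finset.range (a k)).sup fun j => deg k a (w k a j) : ℕ) : ℤ) := by
        exact_mod_cast hqM
      rw [hdeg]
      linarith
  · rfl


end ProjMonomialCurve
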